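/- Let T be a finite tree with vertex set V, let X ⊆ V contain every leaf of T, and let {A, B} be a partition of X into two nonempty sets such that: (i) no edge of T induces the X-split {A, B}; and (ii) for every edge e of T, the X-split induced by e is compatible with {A, B}. Then for every edge e of T, with W and W′ the vertex sets of the two connected components of T with e deleted, exactly one of W, W′ satisfies: X ∩ · is nonempty and is contained in A or contained in B. -/

import Mathlib

open SimpleGraph

section Aux

variable {V : Type*} [Fintype V] [DecidableEq V] (G : SimpleGraph V)

/-- every edge of an acyclic graph is a bridge, stated for `deleteEdges`. -/
lemma aux_bridge (hA : G.IsAcyclic) {u v : V} (huv : G.Adj u v) :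
    ¬ (G.deleteEdges {s(u, v)}).Reachable u v := by
  have := (SimpleGraph.isAcyclic_iff_forall_adj_isBridge.mp hA) huv
  rw [SimpleGraph.isBridge_iff] at this
  exact this

/-- the two sides of a deleted edge cover everything reachable. -/
lemma aux_cover (hconn : G.Connected) {u v : V} (huv : G.Adj u v) (x : V) :
    (G.deleteEdges {s(u, v)}).Reachable u x ∨ (G.deleteEdges {s(u, v)}).Reachable v x := by
  have key : ∀ {a b : V}, G.Walk a b →
      ((G.deleteEdges {s(u, v)}).Reachable u a ∨ (G.deleteEdges {s(u, v)}).Reachable v a) →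
      ((G.deleteEdges {s(u, v)}).Reachable u b ∨ (G.deleteEdges {s(u, v)}).Reachable v b) := by
    intro a b p
    induction p with
    | nil => exact id
    | @cons a c b h q ih =>
      intro ha
      apply ih
      by_cases he : s(a, c) = s(u, v)
      · rw [Sym2.eq_iff] at he
        rcases he with ⟨_, rfl⟩ | ⟨_, rfl⟩
        · exact Or.inr (SimpleGraph.Reachable.refl _)
        · exact Or.inl (SimpleGraph.Reachable.refl _)
      · have hadj : (G.deleteEdges {s(u, v)}).Adj a c := by
          rw [SimpleGraph.deleteEdges_adj]
          exact ⟨h, by simpa using he⟩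
        exact ha.imp (fun h' => h'.trans hadj.reachable) (fun h' => h'.trans hadj.reachable)
  obtain ⟨p⟩ := hconn.preconnected u x
  exact key p (Or.inl (SimpleGraph.Reachable.refl _))

/-- each side of a deleted edge of a tree contains a vertex of `X`, where `X` contains
all leaves. -/
lemma aux_leaf [DecidableRel G.Adj] (hT : G.IsTree) (X : Set V)
    (hleaf : ∀ v : V, G.degree v = 1 → v ∈ X) :
    ∀ n : ℕ, ∀ u v : V, G.Adj u v →
      ({x | (G.deleteEdges {s(u, v)}).Reachable u x}).ncard ≤ n →
      (X ∩ {x | (G.deleteEdges {s(u, v)}).Reachable u x}).Nonempty := by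
  intro n
  induction n with
  | zero =>
    intro u v huv hcard
    exfalso
    have h0 : ({x | (G.deleteEdges {s(u, v)}).Reachable u x}).ncard = 0 := Nat.le_zero.mp hcard
    have hne : ({x | (G.deleteEdges {s(u, v)}).Reachable u x}).Nonempty :=
      ⟨u, SimpleGraph.Reachable.refl _⟩
    have := Set.ncard_pos (Set.toFinite _) |>.mpr hne
    omega
  | succ n ih =>
    intro u v huv hcard
    by_cases hu : u ∈ X
    · exact ⟨u, hu, SimpleGraph.Reachable.refl _⟩
    · -- u has a neighbor other than v
      have hdeg : G.degree u ≠ 1 := fun h => hu (hleaf u h)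
      have hex : ∃ w : V, G.Adj u w ∧ w ≠ v := by
        by_contra h
        push_neg at h
        have : G.neighborFinset u = {v} := by
          apply Finset.eq_singleton_iff_unique_mem.mpr
          constructor
          · rw [SimpleGraph.mem_neighborFinset]; exact huv
          · intro w hw
            rw [SimpleGraph.mem_neighborFinset] at hw
            exact h w hw
        have : G.degree u = 1 := by
          rw [SimpleGraph.degree, this, Finset.card_singleton]
        exact hdeg this
      obtain ⟨w, huw, hwv⟩ := hex
      set Wu := {x | (G.deleteEdges {s(u, v)}).Reachable u x} with hWu
      set W' := {x | (G.deleteEdges {s(w, u)}).Reachable w x} with hW'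
      -- u is not in W'
      have hunotW' : u ∉ W' := by
        intro h
        exact aux_bridge G hT.2 huw.symm h
      -- also v is not in W'
      have hsym_ne : s(u, v) ≠ s(w, u) := by
        intro h
        rw [Sym2.eq_iff] at h
        rcases h with ⟨_, h2⟩ | ⟨_, h2⟩
        · exact huv.ne h2.symm
        · exact hwv h2.symm
      have hvnotW' : v ∉ W' := by
        intro h
        have hadj : (G.deleteEdges {s(w, u)}).Adj v u := by
          rw [SimpleGraph.deleteEdges_adj]
          exact ⟨huv.symm, by simpa [Sym2.eq_swap] using hsym_ne⟩
        exact aux_bridge G hT.2 huw.symm (h.trans hadj.reachable)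
      -- W' ⊆ Wu
      have hsub : W' ⊆ Wu := by
        intro x hx
        obtain ⟨p⟩ := hx
        have hedges : ∀ e ∈ p.edges, e ∈ (G.deleteEdges {s(u, v)}).edgeSet := by
          intro e he
          have h1 : e ∈ (G.deleteEdges {s(w, u)}).edgeSet := p.edges_subset_edgeSet he
          rw [SimpleGraph.edgeSet_deleteEdges] at h1 ⊢
          refine ⟨h1.1, ?_⟩
          intro hcon
          simp only [Set.mem_singleton_iff] at hcon
          subst hcon
          have hu_supp : u ∈ p.support := p.fst_mem_support_of_mem_edges he
          exact hunotW' ⟨p.takeUntil u hu_supp⟩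
        have hadjuw : (G.deleteEdges {s(u, v)}).Adj u w := by
          rw [SimpleGraph.deleteEdges_adj]
          refine ⟨huw, ?_⟩
          simp only [Set.mem_singleton_iff, Sym2.eq_iff]
          push_neg
          exact ⟨fun _ => hwv, fun h1 _ => absurd h1 huv.ne⟩
        exact hadjuw.reachable.trans ⟨p.transfer _ hedges⟩
      -- strict, so apply induction hypothesis
      have huWu : u ∈ Wu := SimpleGraph.Reachable.refl _
      have hss : W' ⊂ Wu := (Set.ssubset_iff_of_subset hsub).mpr ⟨u, huWu, hunotW'⟩
      have hlt : W'.ncard < Wu.ncard := Set.ncard_lt_ncard hss (Set.toFinite _)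
      have hle : W'.ncard ≤ n := by omega
      obtain ⟨y, hyX, hyW'⟩ := ih w u huw.symm hle
      exact ⟨y, hyX, hsub hyW'⟩

end Aux

/-- Let `T` be a finite tree, `X` a set of vertices containing every leaf, and `{A, B}` a
partition of `X` into two nonempty sets such that no edge of `T` induces the `X`-split
`{A, B}` and the `X`-split induced by every edge of `T` is compatible with `{A, B}`.
Then for every edge of `T`, with `Wᵤ` and `Wᵥ` the vertex sets of the two connected
components of `T` with that edge deleted (the vertices reachable from its endpoints `u`
resp. `v`), exactly one of `Wᵤ`, `Wᵥ` satisfies: `X ∩ ·` is nonempty and is contained in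
`A` or contained in `B`. -/
theorem stmt_5 {V : Type*} [Fintype V] [DecidableEq V] (G : SimpleGraph V)
    [DecidableRel G.Adj] (hT : G.IsTree) (X A B : Set V)
    (hleaf : ∀ v : V, G.degree v = 1 → v ∈ X)
    (hAne : A.Nonempty) (hBne : B.Nonempty) (hdisj : A ∩ B = ∅) (hunion : A ∪ B = X)
    (hnosplit : ∀ u v : V, G.Adj u v →
      ¬ ((X ∩ {x | (G.deleteEdges {s(u, v)}).Reachable u x} = A ∧
          X ∩ {x | (G.deleteEdges {s(u, v)}).Reachable v x} = B) ∨
         (X ∩ {x | (G.deleteEdges {s(u, v)}).Reachable u x} = B ∧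
          X ∩ {x | (G.deleteEdges {s(u, v)}).Reachable v x} = A)))
    (hcompat : ∀ u v : V, G.Adj u v →
      (X ∩ {x | (G.deleteEdges {s(u, v)}).Reachable u x}) ∩ A = ∅ ∨
      (X ∩ {x | (G.deleteEdges {s(u, v)}).Reachable u x}) ∩ B = ∅ ∨
      (X ∩ {x | (G.deleteEdges {s(u, v)}).Reachable v x}) ∩ A = ∅ ∨
      (X ∩ {x | (G.deleteEdges {s(u, v)}).Reachable v x}) ∩ B = ∅) :
    ∀ u v : V, G.Adj u v →
      Xor'
        ((X ∩ {x | (G.deleteEdges {s(u, v)}).Reachable u x}).Nonempty ∧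
          (X ∩ {x | (G.deleteEdges {s(u, v)}).Reachable u x} ⊆ A ∨
           X ∩ {x | (G.deleteEdges {s(u, v)}).Reachable u x} ⊆ B))
        ((X ∩ {x | (G.deleteEdges {s(u, v)}).Reachable v x}).Nonempty ∧
          (X ∩ {x | (G.deleteEdges {s(u, v)}).Reachable v x} ⊆ A ∨
           X ∩ {x | (G.deleteEdges {s(u, v)}).Reachable v x} ⊆ B)) := by
  intro u v huv
  have hswap : s(v, u) = s(u, v) := Sym2.eq_swap
  set Wu := {x | (G.deleteEdges {s(u, v)}).Reachable u x} with hWu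
  set Wv := {x | (G.deleteEdges {s(u, v)}).Reachable v x} with hWv
  set P := X ∩ Wu with hP
  set Q := X ∩ Wv with hQ
  -- nonemptiness of both sides
  have hPne : P.Nonempty := aux_leaf G hT X hleaf Wu.ncard u v huv le_rfl
  have hQne : Q.Nonempty := by
    have := aux_leaf G hT X hleaf
      ({x | (G.deleteEdges {s(v, u)}).Reachable v x}).ncard v u huv.symm le_rfl
    rw [hswap] at this
    exact this
  -- the two sides are disjoint and cover X
  have hdisjW : ∀ x, x ∈ Wu → x ∈ Wv → False := by
    intro x hx hy
    exact aux_bridge G hT.2 huv (hx.trans hy.symm)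
  have hcover : ∀ x, x ∈ Wu ∨ x ∈ Wv := aux_cover G hT.1 huv
  have hAB : ∀ x, x ∈ A → x ∈ B → False := by
    intro x ha hb
    have : x ∈ A ∩ B := ⟨ha, hb⟩
    rw [hdisj] at this
    exact this
  -- from compatibility, at least one side is contained in A or in B
  have hone : (P ⊆ A ∨ P ⊆ B) ∨ (Q ⊆ A ∨ Q ⊆ B) := by
    have hAX : ∀ x ∈ X, x ∉ A → x ∈ B := by
      intro x hx hxa
      rw [← hunion] at hx
      exact hx.resolve_left hxa
    have hBX : ∀ x ∈ X, x ∉ B → x ∈ A := by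
      intro x hx hxb
      rw [← hunion] at hx
      exact hx.resolve_right hxb
    rcases hcompat u v huv with h | h | h | h
    · refine Or.inl (Or.inr fun x hx => hAX x hx.1 fun hxa => ?_)
      have : x ∈ P ∩ A := ⟨hx, hxa⟩
      rw [h] at this; exact this
    · refine Or.inl (Or.inl fun x hx => hBX x hx.1 fun hxb => ?_)
      have : x ∈ P ∩ B := ⟨hx, hxb⟩
      rw [h] at this; exact this
    · refine Or.inr (Or.inr fun x hx => hAX x hx.1 fun hxa => ?_)
      have : x ∈ Q ∩ A := ⟨hx, hxa⟩
      rw [h] at this; exact this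
    · refine Or.inr (Or.inl fun x hx => hBX x hx.1 fun hxb => ?_)
      have : x ∈ Q ∩ B := ⟨hx, hxb⟩
      rw [h] at this; exact this
  -- not both sides can be contained in A or in B
  have hnotboth : ¬ ((P ⊆ A ∨ P ⊆ B) ∧ (Q ⊆ A ∨ Q ⊆ B)) := by
    rintro ⟨hPc, hQc⟩
    have hXPQ : ∀ x ∈ X, x ∈ P ∨ x ∈ Q := by
      intro x hx
      rcases hcover x with h | h
      · exact Or.inl ⟨hx, h⟩
      · exact Or.inr ⟨hx, h⟩
    rcases hPc with hPA | hPB <;> rcases hQc with hQA | hQB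
    · -- P ⊆ A, Q ⊆ A : contradicts B nonempty
      obtain ⟨b, hb⟩ := hBne
      have hbX : b ∈ X := by rw [← hunion]; exact Or.inr hb
      rcases hXPQ b hbX with h | h
      · exact hAB b (hPA h) hb
      · exact hAB b (hQA h) hb
    · -- P ⊆ A, Q ⊆ B : this is the forbidden split
      apply hnosplit u v huv
      left
      constructor
      · apply Set.Subset.antisymm hPA
        intro a ha
        have haX : a ∈ X := by rw [← hunion]; exact Or.inl ha
        rcases hXPQ a haX with h | h
        · exact h
        · exact absurd (hQB h) (fun hb => hAB a ha hb)
      · apply Set.Subset.antisymm hQB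
        intro b hb
        have hbX : b ∈ X := by rw [← hunion]; exact Or.inr hb
        rcases hXPQ b hbX with h | h
        · exact absurd (hPA h) (fun ha => hAB b ha hb)
        · exact h
    · -- P ⊆ B, Q ⊆ A : the forbidden split, other orientation
      apply hnosplit u v huv
      right
      constructor
      · apply Set.Subset.antisymm hPB
        intro b hb
        have hbX : b ∈ X := by rw [← hunion]; exact Or.inr hb
        rcases hXPQ b hbX with h | h
        · exact h
        · exact absurd (hQA h) (fun ha => hAB b ha hb)
      · apply Set.Subset.antisymm hQA
        intro a ha
        have haX : a ∈ X := by rw [← hunion]; exact Or.inl ha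
        rcases hXPQ a haX with h | h
        · exact absurd (hPB h) (fun hb => hAB a ha hb)
        · exact h
    · -- P ⊆ B, Q ⊆ B : contradicts A nonempty
      obtain ⟨a, ha⟩ := hAne
      have haX : a ∈ X := by rw [← hunion]; exact Or.inl ha
      rcases hXPQ a haX with h | h
      · exact hAB a ha (hPB h)
      · exact hAB a ha (hQB h)
  rcases hone with h | h
  · exact Or.inl ⟨⟨hPne, h⟩, fun hc => hnotboth ⟨h, hc.2⟩⟩
  · exact Or.inr ⟨⟨hQne, h⟩, fun hc => hnotboth ⟨hc.2, h⟩⟩
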